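/- Lower bound for star products via polynomial spaces: for integers r, k ≥ 1 and any graph G with a proper edge-colouring c, there exists a proper edge-colouring c′ of G□S_k with dim(W^r_{G□S_k, c′}) ≥ dim(W^r_{G,c}) + k·dim(W^{r−1}_{G,c}) + Σ_{t=1}^{k−1} t·d^G_{r−t} + k·Σ_{t=k}^{r} d^G_{r−t}. -/

import Mathlib

open Polynomial

namespace BondPerc

open Classical

set_option maxHeartbeats 1000000

/-- The set of edges eventually infected in `r`-bond bootstrap percolation on `G`
starting from the initially infected set `S`. -/
inductive Infected {V : Type*} (G : SimpleGraph V) (r : ℕ) (S : Set (Sym2 V)) : Sym2 V → Prop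
  | init {e : Sym2 V} (he : e ∈ S) : Infected G r S e
  | step {e : Sym2 V} (he : e ∈ G.edgeSet) (v : V) (hv : v ∈ e)
      (T : Finset (Sym2 V)) (hT : r ≤ T.card)
      (hT1 : ∀ f ∈ T, f ∈ G.edgeSet) (hT2 : ∀ f ∈ T, v ∈ f)
      (hT3 : ∀ f ∈ T, Infected G r S f) : Infected G r S e

/-- `S` percolates in `r`-bond bootstrap percolation on `G`. -/
def Percolates {V : Type*} (G : SimpleGraph V) (r : ℕ) (S : Set (Sym2 V)) : Prop :=
  S ⊆ G.edgeSet ∧ ∀ e ∈ G.edgeSet, Infected G r S e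

/-- `m_e(G,r)`: the minimum size of an `r`-percolating set of edges of `G`. -/
noncomputable def me {V : Type*} (G : SimpleGraph V) (r : ℕ) : ℕ :=
  sInf {n | ∃ S : Set (Sym2 V), S.Finite ∧ Percolates G r S ∧ S.ncard = n}

/-- `c` is a proper edge-colouring of `G`: edges sharing a vertex get distinct colours. -/
def IsProperEdgeColoring {V : Type*} (G : SimpleGraph V) (c : Sym2 V → ℝ) : Prop :=
  ∀ e ∈ G.edgeSet, ∀ f ∈ G.edgeSet, e ≠ f → (∃ v, v ∈ e ∧ v ∈ f) → c e ≠ c f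

set_option maxHeartbeats 1000000 in
/-- The vector space `W^r_{G,c}` of tuples of polynomials `(p_v)` with
`deg p_v ≤ min(r, deg v) - 1` and `p_u(c(uv)) = p_v(c(uv))` for every edge `uv`. -/
noncomputable def Wspace {V : Type*} [Fintype V] (G : SimpleGraph V) (r : ℕ)
    (c : Sym2 V → ℝ) : Submodule ℝ (V → Polynomial ℝ) where
  carrier := {p | (∀ v, (p v).degree < (min r (G.degree v) : ℕ)) ∧
    ∀ u v, G.Adj u v → (p u).eval (c s(u, v)) = (p v).eval (c s(u, v))}
  add_mem' := by
    rintro p q ⟨hp1, hp2⟩ ⟨hq1, hq2⟩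
    refine ⟨fun v => lt_of_le_of_lt (degree_add_le _ _) (max_lt (hp1 v) (hq1 v)), ?_⟩
    intro u v huv
    simp only [Pi.add_apply, eval_add, hp2 u v huv, hq2 u v huv]
  zero_mem' := by
    refine ⟨fun v => ?_, fun u v h => by simp⟩
    simp only [Pi.zero_apply, degree_zero]
    exact WithBot.bot_lt_coe _
  smul_mem' := by
    rintro a p ⟨hp1, hp2⟩
    refine ⟨fun v => lt_of_le_of_lt (degree_smul_le a (p v)) (hp1 v), ?_⟩
    intro u v huv
    simp only [Pi.smul_apply, Polynomial.eval_smul, hp2 u v huv]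

/-- `dim W^r_{G,c}`. -/
noncomputable def Wdim {V : Type*} [Fintype V] (G : SimpleGraph V) (r : ℕ)
    (c : Sym2 V → ℝ) : ℕ :=
  Module.finrank ℝ (Wspace G r c)

/-- `d^G_i`, the number of vertices of `G` of degree `i` (indexed by `ℤ`, zero for `i < 0`). -/
noncomputable def dcount {V : Type*} [Fintype V] (G : SimpleGraph V) (i : ℤ) : ℕ :=
  Nat.card {v : V // (G.degree v : ℤ) = i}

/-- The star `S_k` with centre `0` and `k` leaves. -/
def starGraph (k : ℕ) : SimpleGraph (Fin (k + 1)) :=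
  SimpleGraph.fromRel fun i _ => i = 0

/-- The theta graph `H_{k,ℓ}`: two hub vertices joined by three internally disjoint
paths of lengths `1`, `ℓ - 1` and `k - 1`. -/
def thetaGraph (k l : ℕ) : SimpleGraph (Fin 2 ⊕ Fin (l - 2) ⊕ Fin (k - 2)) :=
  SimpleGraph.fromRel fun x y =>
    (x = Sum.inl 0 ∧ y = Sum.inl 1) ∨
    (x = Sum.inl 0 ∧ ∃ j : Fin (l - 2), y = Sum.inr (Sum.inl j) ∧ j.val = 0) ∨
    (∃ i j : Fin (l - 2), x = Sum.inr (Sum.inl i) ∧ y = Sum.inr (Sum.inl j) ∧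
      j.val = i.val + 1) ∨
    (∃ i : Fin (l - 2), x = Sum.inr (Sum.inl i) ∧ i.val = l - 3 ∧ y = Sum.inl 1) ∨
    (x = Sum.inl 0 ∧ ∃ j : Fin (k - 2), y = Sum.inr (Sum.inr j) ∧ j.val = 0) ∨
    (∃ i j : Fin (k - 2), x = Sum.inr (Sum.inr i) ∧ y = Sum.inr (Sum.inr j) ∧
      j.val = i.val + 1) ∨
    (∃ i : Fin (k - 2), x = Sum.inr (Sum.inr i) ∧ i.val = k - 3 ∧ y = Sum.inl 1)



section StarLowerAux

lemma starGraph_adj {k : ℕ} {i j : Fin (k+1)} :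
    (starGraph k).Adj i j ↔ i ≠ j ∧ (i = 0 ∨ j = 0) := by
  simp [starGraph, SimpleGraph.fromRel_adj]
lemma starGraph_degree_zero (k : ℕ) : (starGraph k).degree 0 = k := by
  classical
  have : (starGraph k).neighborFinset 0 = Finset.univ.filter (fun j => j ≠ (0 : Fin (k+1))) := by
    ext j
    simp [SimpleGraph.mem_neighborFinset, starGraph_adj, ne_comm]
  rw [SimpleGraph.degree, this, Finset.filter_ne']
  simp
lemma starGraph_degree_ne {k : ℕ} {j : Fin (k+1)} (hj : j ≠ 0) : (starGraph k).degree j = 1 := by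
  classical
  have : (starGraph k).neighborFinset j = {0} := by
    ext i
    simp only [SimpleGraph.mem_neighborFinset, starGraph_adj, Finset.mem_singleton]
    constructor
    · rintro ⟨hne, h | h⟩
      · exact absurd h hj
      · exact h
    · rintro rfl; exact ⟨hj, Or.inr rfl⟩
  rw [SimpleGraph.degree, this, Finset.card_singleton]


variable {V : Type*} [Fintype V]

noncomputable def Pv (G : SimpleGraph V) (c : Sym2 V → ℝ) (v : V) : ℝ[X] :=
  ∏ u ∈ G.neighborFinset v, (X - C (c s(v, u)))
lemma Pv_monic (G : SimpleGraph V) (c : Sym2 V → ℝ) (v : V) : (Pv G c v).Monic :=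
  monic_prod_of_monic _ _ fun u _ => monic_X_sub_C _
lemma Pv_ne_zero (G : SimpleGraph V) (c : Sym2 V → ℝ) (v : V) : Pv G c v ≠ 0 :=
  (Pv_monic G c v).ne_zero
lemma Pv_natDegree (G : SimpleGraph V) (c : Sym2 V → ℝ) (v : V) :
    (Pv G c v).natDegree = G.degree v := by
  rw [Pv, natDegree_prod _ _ (fun u _ => X_sub_C_ne_zero _)]
  rw [Finset.sum_congr rfl (fun u _ => natDegree_X_sub_C (c s(v,u))), Finset.sum_const,
    smul_eq_mul, mul_one, SimpleGraph.degree]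
lemma Pv_eval_eq_zero (G : SimpleGraph V) (c : Sym2 V → ℝ) {v u : V} (h : G.Adj v u) :
    (Pv G c v).eval (c s(v, u)) = 0 := by
  rw [Pv, eval_prod]
  exact Finset.prod_eq_zero (by simpa [SimpleGraph.mem_neighborFinset] using h) (by simp)
lemma boxProd_star_degree (G : SimpleGraph V) (k : ℕ) (v : V) (i : Fin (k+1))
    (inst : Fintype ((G □ starGraph k).neighborSet (v, i))) :
    @SimpleGraph.degree _ (G □ starGraph k) (v, i) inst
      = G.degree v + (starGraph k).degree i := by
  convert SimpleGraph.degree_boxProd (G := G) (H := starGraph k) (v, i)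

noncomputable def cstar {V : Type*} (k : ℕ) (c : Sym2 V → ℝ) (γ : Fin (k+1) → ℝ) :
    Sym2 (V × Fin (k+1)) → ℝ :=
  Sym2.lift ⟨fun x y =>
    if x.2 = y.2 then c s(x.1, y.1)
    else if x.1 = y.1 then (if x.2 = 0 then γ y.2 else if y.2 = 0 then γ x.2 else 0)
    else 0, by
      intro x y
      dsimp only
      split_ifs <;>
        first
          | rfl
          | (exact congrArg c (Sym2.eq_swap))
          | simp_all⟩
@[simp] lemma cstar_layer {V : Type*} (k : ℕ) (c : Sym2 V → ℝ) (γ : Fin (k+1) → ℝ)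
    (u v : V) (i : Fin (k+1)) : cstar k c γ s((u, i), (v, i)) = c s(u, v) := by
  simp [cstar]
lemma cstar_star {V : Type*} (k : ℕ) (c : Sym2 V → ℝ) (γ : Fin (k+1) → ℝ)
    (v : V) {j : Fin (k+1)} (hj : j ≠ 0) : cstar k c γ s((v, 0), (v, j)) = γ j := by
  have : (0 : Fin (k+1)) ≠ j := fun h => hj h.symm
  simp [cstar, this]
lemma cstar_star' {V : Type*} (k : ℕ) (c : Sym2 V → ℝ) (γ : Fin (k+1) → ℝ)
    (v : V) {j : Fin (k+1)} (hj : j ≠ 0) : cstar k c γ s((v, j), (v, 0)) = γ j := by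
  rw [Sym2.eq_swap]; exact cstar_star k c γ v hj

lemma boxStar_edge_cases {G : SimpleGraph V} {k : ℕ} {e : Sym2 (V × Fin (k+1))}
    (he : e ∈ (G □ starGraph k).edgeSet) :
    (∃ u v i, G.Adj u v ∧ e = s((u, i), (v, i))) ∨
    (∃ v j, j ≠ 0 ∧ e = s((v, 0), (v, j))) := by
  induction e using Sym2.ind with
  | _ x y =>
    rw [SimpleGraph.mem_edgeSet] at he
    obtain ⟨x1, x2⟩ := x
    obtain ⟨y1, y2⟩ := y
    rcases he with ⟨hadj, h2⟩ | ⟨hadj, h2⟩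
    · exact Or.inl ⟨x1, y1, y2, by simp_all⟩
    · rw [starGraph_adj] at hadj
      dsimp at h2 hadj
      subst h2
      rcases hadj.2 with h | h
      · exact Or.inr ⟨x1, y2, by rw [h] at hadj; exact fun hh => hadj.1 hh.symm, by rw [h]⟩
      · refine Or.inr ⟨x1, x2, by rw [h] at hadj; exact hadj.1, ?_⟩
        rw [h, Sym2.eq_swap]

lemma cstar_proper {G : SimpleGraph V} {k : ℕ} {c : Sym2 V → ℝ}
    (hc : IsProperEdgeColoring G c) {γ : Fin (k+1) → ℝ}
    (hγinj : Function.Injective γ)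
    (hγ : ∀ e ∈ G.edgeSet, ∀ j, c e ≠ γ j) :
    IsProperEdgeColoring (G □ starGraph k) (cstar k c γ) := by
  intro e he f hf hne hshare
  rcases boxStar_edge_cases he with ⟨u, v, i, huv, rfl⟩ | ⟨v, j, hj, rfl⟩ <;>
    rcases boxStar_edge_cases hf with ⟨u', v', i', huv', rfl⟩ | ⟨v', j', hj', rfl⟩
  · -- layer vs layer
    rw [cstar_layer, cstar_layer]
    obtain ⟨w, hw1, hw2⟩ := hshare
    rw [Sym2.mem_iff] at hw1 hw2
    have hii' : i = i' := by
      rcases hw1 with rfl | rfl <;> rcases hw2 with h | h <;>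
        simpa using congrArg Prod.snd h
    subst hii'
    by_cases heq : s(u, v) = s(u', v')
    · exfalso
      apply hne
      rw [Sym2.eq_iff] at heq
      rcases heq with ⟨rfl, rfl⟩ | ⟨rfl, rfl⟩
      · rfl
      · exact Sym2.eq_swap
    · refine hc s(u, v) huv s(u', v') huv' heq ⟨w.1, ?_, ?_⟩
      · rw [Sym2.mem_iff]
        rcases hw1 with h | h
        exacts [Or.inl (congrArg Prod.fst h), Or.inr (congrArg Prod.fst h)]
      · rw [Sym2.mem_iff]
        rcases hw2 with h | h
        exacts [Or.inl (congrArg Prod.fst h), Or.inr (congrArg Prod.fst h)]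
  · -- layer vs star
    rw [cstar_layer, cstar_star _ _ _ _ hj']
    exact hγ s(u, v) huv j'
  · -- star vs layer
    rw [cstar_layer, cstar_star _ _ _ _ hj]
    exact fun h => hγ s(u', v') huv' j h.symm
  · -- star vs star
    rw [cstar_star _ _ _ _ hj, cstar_star _ _ _ _ hj']
    intro hγeq
    have hjj' : j = j' := hγinj hγeq
    subst hjj'
    apply hne
    obtain ⟨w, hw1, hw2⟩ := hshare
    rw [Sym2.mem_iff] at hw1 hw2
    have hvv' : v = v' := by
      rcases hw1 with rfl | rfl <;> rcases hw2 with h | h <;>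
        simpa using congrArg Prod.fst h
    rw [hvv']

lemma count_identity {V : Type*} [Fintype V] (G : SimpleGraph V) (r k : ℕ) (hk : 1 ≤ k) :
    (∑ t ∈ Finset.Icc 1 (k - 1), t * dcount G ((r : ℤ) - t)) +
      k * ∑ t ∈ Finset.Icc k r, dcount G ((r : ℤ) - t) =
    ∑ v : V, min (r - G.degree v) k := by
  classical
  set R := max k r with hR
  have hN : ∀ t : ℕ, dcount G ((r : ℤ) - t) =
      (Finset.univ.filter fun v : V => G.degree v + t = r).card := by
    intro t
    rw [dcount, Nat.card_eq_fintype_card, Fintype.card_subtype]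
    congr 1
    exact Finset.filter_congr fun v _ => by constructor <;> intro h <;> omega
  have key : ∀ v : V, min (r - G.degree v) k =
      ∑ t ∈ Finset.Icc 1 R, if G.degree v + t = r then min t k else 0 := by
    intro v
    rcases lt_or_ge (G.degree v) r with h | h
    · rw [Finset.sum_eq_single (r - G.degree v)
        (fun t ht hne => by rw [if_neg (by omega)])
        (fun habs => absurd (Finset.mem_Icc.mpr ⟨by omega, by omega⟩) habs),
        if_pos (by omega)]
    · have h0 : r - G.degree v = 0 := Nat.sub_eq_zero_of_le h
      rw [h0, Finset.sum_eq_zero (fun t ht => by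
        rw [Finset.mem_Icc] at ht
        rw [if_neg (by omega)])]
      simp
  have main : ∑ v : V, min (r - G.degree v) k =
      ∑ t ∈ Finset.Icc 1 R, min t k *
        (Finset.univ.filter fun v : V => G.degree v + t = r).card := by
    rw [Finset.sum_congr rfl fun v _ => key v, Finset.sum_comm]
    refine Finset.sum_congr rfl fun t _ => ?_
    rw [← Finset.sum_filter, Finset.sum_const, smul_eq_mul, mul_comm]
  rw [main]
  have hIcc1 : Finset.Icc 1 R = Finset.Ioc 0 R := Finset.Icc_add_one_left_eq_Ioc 0 R
  have hIcc2 : Finset.Icc 1 (k-1) = Finset.Ioc 0 (k-1) := Finset.Icc_add_one_left_eq_Ioc 0 (k-1)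
  have hIcc3 : Finset.Icc k r = Finset.Ioc (k-1) r := by
    rw [← Finset.Icc_add_one_left_eq_Ioc]; congr 1; omega
  rw [hIcc1, ← Finset.sum_Ioc_consecutive _ (Nat.zero_le (k-1)) (by omega : k - 1 ≤ R)]
  have e1 : ∑ t ∈ Finset.Ioc 0 (k-1), min t k *
      (Finset.univ.filter fun v : V => G.degree v + t = r).card =
      ∑ t ∈ Finset.Icc 1 (k - 1), t * dcount G ((r : ℤ) - t) := by
    rw [hIcc2]
    refine Finset.sum_congr rfl fun t ht => ?_
    rw [Finset.mem_Ioc] at ht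
    rw [min_eq_left (by omega), hN]
  have e2 : ∑ t ∈ Finset.Ioc (k-1) R, min t k *
      (Finset.univ.filter fun v : V => G.degree v + t = r).card =
      k * ∑ t ∈ Finset.Icc k r, dcount G ((r : ℤ) - t) := by
    have step : ∑ t ∈ Finset.Ioc (k-1) R, min t k *
        (Finset.univ.filter fun v : V => G.degree v + t = r).card =
        ∑ t ∈ Finset.Ioc (k-1) R, k *
        (Finset.univ.filter fun v : V => G.degree v + t = r).card :=
      Finset.sum_congr rfl fun t ht => by
        rw [Finset.mem_Ioc] at ht
        rw [min_eq_right (by omega : k ≤ t)]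
    rw [step, ← Finset.mul_sum]
    congr 1
    rw [hIcc3, Finset.sum_congr rfl fun t _ => hN t]
    refine (Finset.sum_subset (Finset.Ioc_subset_Ioc le_rfl (by omega : r ≤ R))
      fun t ht hts => ?_).symm
    rw [Finset.mem_Ioc] at ht hts
    rw [Finset.card_eq_zero, Finset.filter_eq_empty_iff]
    intro v _
    omega
  rw [e1, e2]

/-- The main embedding map (unbundled). -/
noncomputable def phi (G : SimpleGraph V) (c : Sym2 V → ℝ) {k : ℕ} (γ : Fin (k+1) → ℝ)
    (p : V → ℝ[X]) (q : Fin k → V → ℝ[X]) (h : V → ℝ[X]) : V × Fin (k+1) → ℝ[X] :=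
  fun x =>
    if hx : x.2 = 0 then p x.1 + Pv G c x.1 * h x.1
    else p x.1 + (X - C (γ x.2)) * q (x.2.pred hx) x.1 +
      Pv G c x.1 * C ((h x.1).eval (γ x.2))

lemma phi_zero (G : SimpleGraph V) (c : Sym2 V → ℝ) {k : ℕ} (γ : Fin (k+1) → ℝ)
    (p : V → ℝ[X]) (q : Fin k → V → ℝ[X]) (h : V → ℝ[X]) (v : V) :
    phi G c γ p q h (v, 0) = p v + Pv G c v * h v := by
  simp [phi]

lemma phi_ne (G : SimpleGraph V) (c : Sym2 V → ℝ) {k : ℕ} (γ : Fin (k+1) → ℝ)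
    (p : V → ℝ[X]) (q : Fin k → V → ℝ[X]) (h : V → ℝ[X]) (v : V)
    {i : Fin (k+1)} (hi : i ≠ 0) :
    phi G c γ p q h (v, i) = p v + (X - C (γ i)) * q (i.pred hi) v +
      Pv G c v * C ((h v).eval (γ i)) := by
  simp [phi, hi]

lemma phi_mem {G : SimpleGraph V} {r k : ℕ} (hr : 1 ≤ r)
    {c : Sym2 V → ℝ} (γ : Fin (k+1) → ℝ)
    {p : V → ℝ[X]} (hp : p ∈ Wspace G r c)
    {q : Fin k → V → ℝ[X]} (hq : ∀ i, q i ∈ Wspace G (r-1) c)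
    {h : V → ℝ[X]} (hh : ∀ v, (h v).degree < ((min (r - G.degree v) k : ℕ) : WithBot ℕ)) :
    phi G c γ p q h ∈ Wspace (G □ starGraph k) r (cstar k c γ) := by
  obtain ⟨hpdeg, hpedge⟩ := hp
  constructor
  · -- degree bounds
    rintro ⟨v, i⟩
    rw [boxProd_star_degree]
    by_cases hi : i = 0
    · subst hi
      rw [starGraph_degree_zero, phi_zero]
      refine lt_of_le_of_lt (degree_add_le _ _) (max_lt ?_ ?_)
      · exact lt_of_lt_of_le (hpdeg v) (by exact_mod_cast min_le_min le_rfl (by omega))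
      · by_cases hhv : h v = 0
        · rw [hhv, mul_zero, degree_zero]
          exact_mod_cast WithBot.bot_lt_coe _
        · have hd := (natDegree_lt_iff_degree_lt hhv).mpr (hh v)
          have hne : Pv G c v * h v ≠ 0 := mul_ne_zero (Pv_ne_zero G c v) hhv
          rw [← natDegree_lt_iff_degree_lt hne,
            natDegree_mul (Pv_ne_zero G c v) hhv, Pv_natDegree]
          omega
    · rw [starGraph_degree_ne hi, phi_ne G c γ p q h v hi]
      refine lt_of_le_of_lt (degree_add_le _ _) (max_lt (lt_of_le_of_lt (degree_add_le _ _)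
        (max_lt ?_ ?_)) ?_)
      · exact lt_of_lt_of_le (hpdeg v) (by exact_mod_cast min_le_min le_rfl (by omega))
      · by_cases hqv : q (i.pred hi) v = 0
        · rw [hqv, mul_zero, degree_zero]
          exact_mod_cast WithBot.bot_lt_coe _
        · have hqd := ((hq (i.pred hi)).1 v)
          have hd := (natDegree_lt_iff_degree_lt hqv).mpr hqd
          have hne : (X - C (γ i)) * q (i.pred hi) v ≠ 0 :=
            mul_ne_zero (X_sub_C_ne_zero _) hqv
          rw [← natDegree_lt_iff_degree_lt hne,
            natDegree_mul (X_sub_C_ne_zero _) hqv, natDegree_X_sub_C]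
          omega
      · by_cases hev : (h v).eval (γ i) = 0
        · rw [hev, map_zero, mul_zero, degree_zero]
          exact_mod_cast WithBot.bot_lt_coe _
        · have hhv : h v ≠ 0 := fun h0 => hev (by rw [h0]; simp)
          have hd := (natDegree_lt_iff_degree_lt hhv).mpr (hh v)
          have hne : Pv G c v * C ((h v).eval (γ i)) ≠ 0 :=
            mul_ne_zero (Pv_ne_zero G c v) (by rwa [Ne, C_eq_zero])
          rw [← natDegree_lt_iff_degree_lt hne,
            natDegree_mul (Pv_ne_zero G c v) (by rwa [Ne, C_eq_zero]),
            Pv_natDegree, natDegree_C]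
          omega
  · -- edge constraints
    rintro ⟨u, i⟩ ⟨v, j⟩ hadj
    rcases hadj with ⟨hG, h2⟩ | ⟨hS, h2⟩
    · -- layer edge
      dsimp at hG h2
      subst h2
      rw [cstar_layer]
      have hPu : (Pv G c u).eval (c s(u, v)) = 0 := Pv_eval_eq_zero G c hG
      have hPv : (Pv G c v).eval (c s(u, v)) = 0 := by
        have := Pv_eval_eq_zero G c hG.symm
        rwa [Sym2.eq_swap] at this
      by_cases hi : i = 0
      · subst hi
        rw [phi_zero, phi_zero]
        simp [eval_add, eval_mul, hPu, hPv, hpedge u v hG]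
      · rw [phi_ne G c γ p q h u hi, phi_ne G c γ p q h v hi]
        simp only [eval_add, eval_mul, eval_sub, eval_X, eval_C, hPu, hPv, zero_mul,
          add_zero, hpedge u v hG, (hq (i.pred hi)).2 u v hG]
    · -- star edge
      dsimp at hS h2
      subst h2
      rw [starGraph_adj] at hS
      obtain ⟨hij, hcase⟩ := hS
      rcases hcase with rfl | rfl
      · have hj : j ≠ 0 := fun hh => hij hh.symm
        rw [cstar_star _ _ _ _ hj, phi_zero, phi_ne G c γ p q h u hj]
        simp [eval_add, eval_mul, eval_sub, eval_X, eval_C]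
      · rw [cstar_star' _ _ _ _ hij, phi_zero, phi_ne G c γ p q h u hij]
        simp [eval_add, eval_mul, eval_sub, eval_X, eval_C]

lemma phi_eq_zero {G : SimpleGraph V} {r k : ℕ} {c : Sym2 V → ℝ} (γ : Fin (k+1) → ℝ)
    {p : V → ℝ[X]} (hp : p ∈ Wspace G r c)
    {h : V → ℝ[X]} (hh : ∀ v, (h v).degree < ((min (r - G.degree v) k : ℕ) : WithBot ℕ))
    {q : Fin k → V → ℝ[X]}
    (h0 : phi G c γ p q h = 0) : p = 0 ∧ q = 0 ∧ h = 0 := by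
  have hub : ∀ v, p v + Pv G c v * h v = 0 := by
    intro v
    have := congrFun h0 (v, 0)
    rwa [phi_zero] at this
  have hh0 : ∀ v, h v = 0 := by
    intro v
    by_contra hne
    have hd := (natDegree_lt_iff_degree_lt hne).mpr (hh v)
    have hPh : Pv G c v * h v ≠ 0 := mul_ne_zero (Pv_ne_zero G c v) hne
    have hpv : p v = -(Pv G c v * h v) := by
      have h3 := hub v
      rw [add_eq_zero_iff_eq_neg] at h3
      exact h3
    have hpne : p v ≠ 0 := by
      rw [hpv, neg_ne_zero]; exact hPh
    have h1 := (natDegree_lt_iff_degree_lt hpne).mpr (hp.1 v)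
    have h2 : (p v).natDegree = G.degree v + (h v).natDegree := by
      rw [hpv, natDegree_neg, natDegree_mul (Pv_ne_zero G c v) hne, Pv_natDegree]
    omega
  have hp0 : ∀ v, p v = 0 := by
    intro v
    have := hub v
    rwa [hh0 v, mul_zero, add_zero] at this
  have hq0 : ∀ (i : Fin k) (v : V), q i v = 0 := by
    intro i v
    have h1 := congrFun h0 (v, i.succ)
    rw [phi_ne G c γ p q h v (Fin.succ_ne_zero i)] at h1
    rw [hp0 v, hh0 v, Fin.pred_succ] at h1
    simp only [eval_zero, map_zero, mul_zero, zero_add, add_zero, Pi.zero_apply] at h1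
    rcases mul_eq_zero.mp h1 with h2 | h2
    · exact absurd h2 (X_sub_C_ne_zero _)
    · exact h2
  exact ⟨funext hp0, funext (fun i => funext (hq0 i)), funext hh0⟩

lemma wspace_fd (G : SimpleGraph V) (r : ℕ) (c : Sym2 V → ℝ) :
    FiniteDimensional ℝ (Wspace G r c) := by
  haveI : FiniteDimensional ℝ (Polynomial.degreeLT ℝ r : Submodule ℝ ℝ[X]) :=
    (Polynomial.degreeLTEquiv ℝ r).symm.finiteDimensional
  let f : Wspace G r c →ₗ[ℝ] (V → Polynomial.degreeLT ℝ r) :=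
    { toFun := fun p => fun v => ⟨p.1 v, Polynomial.mem_degreeLT.mpr
        (lt_of_lt_of_le (p.2.1 v) (by exact_mod_cast min_le_left _ _))⟩
      map_add' := fun x y => rfl
      map_smul' := fun a x => rfl }
  exact FiniteDimensional.of_injective f (fun x y hxy => Subtype.ext (funext fun v =>
      congrArg Subtype.val (congrFun hxy v)))

lemma finrank_degreeLT (n : ℕ) :
    Module.finrank ℝ (Polynomial.degreeLT ℝ n : Submodule ℝ ℝ[X]) = n := by
  rw [(Polynomial.degreeLTEquiv ℝ n).finrank_eq, Module.finrank_pi, Fintype.card_fin]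



end StarLowerAux

/-- Lower bound for star products via polynomial spaces. -/
theorem star_lower {V : Type*} [Fintype V] (G : SimpleGraph V) (r k : ℕ)
    (hr : 1 ≤ r) (hk : 1 ≤ k) (c : Sym2 V → ℝ) (hc : IsProperEdgeColoring G c) :
    ∃ c' : Sym2 (V × Fin (k + 1)) → ℝ, IsProperEdgeColoring (G □ starGraph k) c' ∧
      Wdim G r c + k * Wdim G (r - 1) c +
        (∑ t ∈ Finset.Icc 1 (k - 1), t * dcount G ((r : ℤ) - t)) +
        k * ∑ t ∈ Finset.Icc k r, dcount G ((r : ℤ) - t) ≤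
      Wdim (G □ starGraph k) r c' := by
  classical
  set M : ℝ := ∑ e : Sym2 V, |c e| with hM
  have hMle : ∀ e : Sym2 V, c e ≤ M := fun e =>
    le_trans (le_abs_self _)
      (Finset.single_le_sum (fun f _ => abs_nonneg (c f)) (Finset.mem_univ e))
  set γ : Fin (k+1) → ℝ := fun j => M + 1 + (j : ℕ) with hγdef
  have hγinj : Function.Injective γ := by
    intro a b hab
    simp only [hγdef] at hab
    have : ((a : ℕ) : ℝ) = ((b : ℕ) : ℝ) := by linarith
    exact Fin.ext (Nat.cast_injective this)
  have hγne : ∀ e ∈ G.edgeSet, ∀ j, c e ≠ γ j := by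
    intro e he j hEq
    have h1 : (0:ℝ) ≤ ((j:ℕ):ℝ) := Nat.cast_nonneg _
    have h2 := hMle e
    simp only [hγdef] at hEq
    linarith
  refine ⟨cstar k c γ, cstar_proper hc hγinj hγne, ?_⟩
  haveI hfd1 : FiniteDimensional ℝ (Wspace G r c) := wspace_fd G r c
  haveI hfd2 : FiniteDimensional ℝ (Wspace G (r-1) c) := wspace_fd G (r-1) c
  haveI hfd3 : FiniteDimensional ℝ (Wspace (G □ starGraph k) r (cstar k c γ)) :=
    wspace_fd _ r _
  haveI hfdH : ∀ v : V, FiniteDimensional ℝ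
      (Polynomial.degreeLT ℝ (min (r - G.degree v) k) : Submodule ℝ ℝ[X]) :=
    fun v => (Polynomial.degreeLTEquiv ℝ _).symm.finiteDimensional
  let Φ₀ : ((Wspace G r c) × (Fin k → Wspace G (r-1) c) ×
      (∀ v : V, (Polynomial.degreeLT ℝ (min (r - G.degree v) k) : Submodule ℝ ℝ[X])))
      →ₗ[ℝ] ((V × Fin (k+1)) → ℝ[X]) :=
    { toFun := fun x => phi G c γ x.1.1 (fun i => (x.2.1 i).1) (fun v => (x.2.2 v).1)
      map_add' := by
        intro x y
        funext z
        obtain ⟨v, i⟩ := z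
        rw [Pi.add_apply]
        by_cases hi : i = 0
        · subst hi
          rw [phi_zero, phi_zero, phi_zero]
          simp only [Prod.fst_add, Prod.snd_add, Pi.add_apply, Submodule.coe_add]
          ring
        · rw [phi_ne G c γ _ _ _ v hi, phi_ne G c γ _ _ _ v hi, phi_ne G c γ _ _ _ v hi]
          simp only [Prod.fst_add, Prod.snd_add, Pi.add_apply, Submodule.coe_add,
            eval_add, map_add]
          ring
      map_smul' := by
        intro a x
        funext z
        obtain ⟨v, i⟩ := z
        dsimp only [RingHom.id_apply]
        rw [Pi.smul_apply]
        by_cases hi : i = 0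
        · subst hi
          rw [phi_zero, phi_zero]
          simp only [Prod.smul_fst, Prod.smul_snd, Pi.smul_apply, Submodule.coe_smul,
            smul_eq_C_mul]
          ring
        · rw [phi_ne G c γ _ _ _ v hi, phi_ne G c γ _ _ _ v hi]
          simp only [Prod.smul_fst, Prod.smul_snd, Pi.smul_apply, Submodule.coe_smul,
            smul_eq_C_mul, eval_mul, eval_C, map_mul]
          ring }
  let Φ := LinearMap.codRestrict (Wspace (G □ starGraph k) r (cstar k c γ)) Φ₀
    (fun x => by
      rw [show Φ₀ x = phi G c γ x.1.1 (fun i => (x.2.1 i).1) (fun v => (x.2.2 v).1) from rfl]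
      exact phi_mem hr γ x.1.2 (fun i => (x.2.1 i).2)
        (fun v => Polynomial.mem_degreeLT.mp (x.2.2 v).2))
  have hinj : Function.Injective Φ := by
    have : Function.Injective Φ₀ := by
      rw [injective_iff_map_eq_zero]
      intro x hx
      have hx' : phi G c γ x.1.1 (fun i => (x.2.1 i).1) (fun v => (x.2.2 v).1) = 0 := hx
      obtain ⟨hp0, hq0, hh0⟩ := phi_eq_zero γ x.1.2
        (fun v => Polynomial.mem_degreeLT.mp (x.2.2 v).2) hx'
      refine Prod.ext (Subtype.ext hp0) (Prod.ext ?_ ?_)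
      · exact funext fun i => Subtype.ext (congrFun hq0 i)
      · exact funext fun v => Subtype.ext (congrFun hh0 v)
    intro a b hab
    exact this (congrArg Subtype.val hab)
  have hle := LinearMap.finrank_le_finrank_of_injective hinj
  have hD : Module.finrank ℝ ((Wspace G r c) × (Fin k → Wspace G (r-1) c) ×
      (∀ v : V, (Polynomial.degreeLT ℝ (min (r - G.degree v) k) : Submodule ℝ ℝ[X]))) =
      Module.finrank ℝ (Wspace G r c) + (k * Module.finrank ℝ (Wspace G (r-1) c) +
        ∑ v : V, min (r - G.degree v) k) := by
    rw [Module.finrank_prod, Module.finrank_prod, Module.finrank_pi_fintype,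
      Module.finrank_pi_fintype]
    congr 2
    · rw [Finset.sum_const, Finset.card_univ, Fintype.card_fin, smul_eq_mul]
    · exact Finset.sum_congr rfl fun v _ => finrank_degreeLT _
  rw [hD] at hle
  show Wdim G r c + k * Wdim G (r - 1) c + _ + _ ≤
    Module.finrank ℝ (Wspace (G □ starGraph k) r (cstar k c γ))
  rw [Wdim, Wdim]
  calc Module.finrank ℝ (Wspace G r c) + k * Module.finrank ℝ (Wspace G (r-1) c) +
        (∑ t ∈ Finset.Icc 1 (k - 1), t * dcount G ((r : ℤ) - t)) +
        k * ∑ t ∈ Finset.Icc k r, dcount G ((r : ℤ) - t)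
      = Module.finrank ℝ (Wspace G r c) + (k * Module.finrank ℝ (Wspace G (r-1) c) +
        ∑ v : V, min (r - G.degree v) k) := by rw [← count_identity G r k hk]; ring
    _ ≤ _ := hle



end BondPerc
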